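/- For every integer N ≥ 2, the (N−1)×(N−1) real matrix S indexed by m, n ∈ {1,…,N−1} with entries S_{m,n} = √(2/N)·sin(π·m·n/N) is symmetric and satisfies S² = 1 (the identity matrix); in particular S is orthogonal. -/

import Mathlib

open Finset Real

lemma exp_sum (N : ℕ) (hN : 0 < N) (j : ℤ) :
    ∑ k ∈ Finset.range (2*N), Complex.exp (Real.pi * Complex.I * j * k / N)
      = if (2*(N:ℤ)) ∣ j then (2*N : ℂ) else 0 := by
  have hNC : (N:ℂ) ≠ 0 := Nat.cast_ne_zero.mpr hN.ne'
  have hpi : (Real.pi : ℂ) ≠ 0 := Complex.ofReal_ne_zero.mpr Real.pi_ne_zero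
  set r : ℂ := Complex.exp (Real.pi * Complex.I * j / N) with hr
  have hterm : ∀ k : ℕ, Complex.exp (Real.pi * Complex.I * j * k / N) = r ^ k := by
    intro k
    rw [hr, ← Complex.exp_nat_mul]
    ring_nf
  simp only [hterm]
  have hrpow : r ^ (2*N) = 1 := by
    rw [hr, ← Complex.exp_nat_mul]
    have : ((2*N : ℕ) : ℂ) * (Real.pi * Complex.I * j / N) = (j:ℂ) * (2 * Real.pi * Complex.I) := by
      push_cast; field_simp
    rw [this, Complex.exp_int_mul_two_pi_mul_I]
  by_cases hdvd : (2*(N:ℤ)) ∣ j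
  · have hr1 : r = 1 := by
      obtain ⟨t, ht⟩ := hdvd
      rw [hr]
      have : (Real.pi : ℂ) * Complex.I * j / N = (t:ℂ) * (2 * Real.pi * Complex.I) := by
        rw [ht]; push_cast; field_simp
      rw [this, Complex.exp_int_mul_two_pi_mul_I]
    simp [hr1, hdvd]
  · have hr1 : r ≠ 1 := by
      intro h
      rw [hr, Complex.exp_eq_one_iff] at h
      obtain ⟨t, ht⟩ := h
      apply hdvd
      refine ⟨t, ?_⟩
      have h2 : (Real.pi : ℂ) * Complex.I * j = (t:ℂ) * (2 * Real.pi * Complex.I) * N := by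
        field_simp at ht
        linear_combination (Real.pi * Complex.I) * ht
      have h3 : (Real.pi:ℂ) * Complex.I * j = (Real.pi:ℂ) * Complex.I * ((2*N*t : ℤ):ℂ) := by
        push_cast; linear_combination h2
      have h4 := mul_left_cancel₀ (mul_ne_zero hpi Complex.I_ne_zero) h3
      exact_mod_cast h4
    rw [geom_sum_eq hr1, hrpow]
    simp [hdvd]

lemma cos_sum_two (N : ℕ) (hN : 0 < N) (j : ℤ) :
    ∑ k ∈ Finset.range (2*N), Real.cos (Real.pi * j * k / N)
      = if (2*(N:ℤ)) ∣ j then (2*N : ℝ) else 0 := by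
  have key := congrArg Complex.re (exp_sum N hN j)
  rw [Complex.re_sum] at key
  have hterm : ∀ k : ℕ, (Complex.exp (Real.pi * Complex.I * j * k / N)).re
      = Real.cos (Real.pi * j * k / N) := by
    intro k
    rw [← Complex.exp_ofReal_mul_I_re]
    congr 1
    push_cast
    ring
  rw [Finset.sum_congr rfl (fun k _ => hterm k)] at key
  rw [key]
  split <;> simp

lemma cos_sum (N : ℕ) (hN : 0 < N) (j : ℤ) :
    ∑ k ∈ Finset.range N, Real.cos (Real.pi * j * k / N)
      = ((if (2*(N:ℤ)) ∣ j then (2*N : ℝ) else 0) + 1 - Real.cos (Real.pi * j)) / 2 := by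
  have key := cos_sum_two N hN j
  rw [two_mul, Finset.sum_range_add] at key
  have h2 : ∑ k ∈ Finset.range N, Real.cos (Real.pi * j * ((N + k : ℕ) : ℝ) / N)
      = (∑ k ∈ Finset.range N, Real.cos (Real.pi * j * k / N)) - 1 + Real.cos (Real.pi * j) := by
    rw [← Finset.sum_range_reflect (fun k => Real.cos (Real.pi * j * ((N + k : ℕ) : ℝ) / N)) N]
    have hfix : ∀ k ∈ Finset.range N,
        Real.cos (Real.pi * j * (↑(N + (N - 1 - k)) : ℝ) / N) = Real.cos (Real.pi * j * (k+1) / N) := by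
      intro k hk
      rw [Finset.mem_range] at hk
      have hcast : ((N + (N - 1 - k) : ℕ) : ℝ) = 2*N - 1 - k := by
        have h1 : k ≤ N - 1 := Nat.le_sub_one_of_lt hk
        push_cast [Nat.sub_sub, Nat.cast_sub (by omega : 1 + k ≤ N)]
        ring
      rw [hcast]
      have harg : Real.pi * j * (2*(N:ℝ) - 1 - k) / N = -(Real.pi * j * (k+1) / N) + (j:ℝ) * (2 * Real.pi) := by
        have : (N:ℝ) ≠ 0 := Nat.cast_ne_zero.mpr hN.ne'
        field_simp; ring
      rw [harg, Real.cos_add_int_mul_two_pi, Real.cos_neg]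
    rw [Finset.sum_congr rfl hfix]
    have := Finset.sum_range_succ' (fun k => Real.cos (Real.pi * j * k / N)) N
    rw [Finset.sum_range_succ] at this
    have hN' : Real.pi * j * (N:ℝ) / N = Real.pi * j := by
      field_simp
    simp only [Nat.cast_zero, mul_zero, zero_div, Real.cos_zero, Nat.cast_add, Nat.cast_one, hN'] at this
    push_cast
    linarith [this]
  rw [h2] at key
  linarith [key]

lemma cos_sum' (N : ℕ) (hN : 0 < N) (j : ℤ) :
    ∑ k ∈ Finset.range (N-1), Real.cos (Real.pi * j * (k+1) / N)
      = ((if (2*(N:ℤ)) ∣ j then (2*N : ℝ) else 0) + 1 - Real.cos (Real.pi * j)) / 2 - 1 := by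
  have h := Finset.sum_range_succ' (fun k => Real.cos (Real.pi * j * k / N)) (N-1)
  rw [Nat.sub_add_cancel hN, cos_sum N hN j] at h
  simp only [Nat.cast_zero, mul_zero, zero_div, Real.cos_zero, Nat.cast_add, Nat.cast_one] at h
  linarith [h]

lemma sin_orth (N a b : ℕ) (hN : 2 ≤ N) (ha : 1 ≤ a) (ha' : a ≤ N - 1)
    (hb : 1 ≤ b) (hb' : b ≤ N - 1) :
    ∑ k ∈ Finset.range (N-1), Real.sin (Real.pi * a * (k+1) / N) * Real.sin (Real.pi * b * (k+1) / N)
      = if a = b then (N:ℝ)/2 else 0 := by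
  have hN0 : 0 < N := by omega
  have hNR : (N:ℝ) ≠ 0 := Nat.cast_ne_zero.mpr hN0.ne'
  have hterm : ∀ k : ℕ,
      Real.sin (Real.pi * a * (k+1) / N) * Real.sin (Real.pi * b * (k+1) / N)
        = (Real.cos (Real.pi * ((a:ℤ) - b) * (k+1) / N)
            - Real.cos (Real.pi * ((a:ℤ) + b) * (k+1) / N)) / 2 := by
    intro k
    have h1 : Real.pi * (((a:ℤ) - b) : ℝ) * (k+1) / N
        = Real.pi * a * (k+1) / N - Real.pi * b * (k+1) / N := by push_cast; field_simp
    have h2 : Real.pi * (((a:ℤ) + b) : ℝ) * (k+1) / N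
        = Real.pi * a * (k+1) / N + Real.pi * b * (k+1) / N := by push_cast; field_simp
    rw [h1, h2, Real.cos_sub, Real.cos_add]
    ring
  rw [Finset.sum_congr rfl (fun k _ => hterm k), ← Finset.sum_div, Finset.sum_sub_distrib]
  have hA := cos_sum' N hN0 ((a:ℤ) - b)
  have hB := cos_sum' N hN0 ((a:ℤ) + b)
  push_cast at hA hB ⊢
  rw [hA, hB]
  have hcos : Real.cos (Real.pi * ((a:ℝ) + b)) = Real.cos (Real.pi * ((a:ℝ) - b)) := by
    have : Real.pi * ((a:ℝ) + b) = Real.pi * ((a:ℝ) - b) + ((b:ℤ):ℝ) * (2 * Real.pi) := by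
      push_cast; ring
    rw [this, Real.cos_add_int_mul_two_pi]
  have hd2 : ¬ (2*(N:ℤ)) ∣ ((a:ℤ) + b) := by
    intro h
    have := Int.le_of_dvd (by omega) h
    omega
  rw [if_neg hd2, hcos]
  by_cases hab : a = b
  · subst hab
    rw [if_pos rfl, if_pos (by simp)]
    simp only [sub_self, mul_zero, Real.cos_zero]
    ring
  · have hd1 : ¬ (2*(N:ℤ)) ∣ ((a:ℤ) - b) := by
      intro h
      have habs : (2*(N:ℤ)) ∣ |(a:ℤ) - b| := (dvd_abs _ _).mpr h
      have h0 : (a:ℤ) - b ≠ 0 := by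
        intro h'; exact hab (by omega)
      have h1 := Int.le_of_dvd (abs_pos.mpr h0) habs
      rcases abs_cases ((a:ℤ) - b) with ⟨he, _⟩ | ⟨he, _⟩ <;> omega
    rw [if_neg hab, if_neg hd1]
    ring

/-- The type-I discrete sine transform `S^I_{N-1}`, the `(N-1) × (N-1)` real matrix
with entries `√(2/N) sin(π m n / N)` for `m, n ∈ {1, …, N-1}`. -/
noncomputable def sineTransformI (N : ℕ) : Matrix (Fin (N - 1)) (Fin (N - 1)) ℝ :=
  fun m n => Real.sqrt (2 / N) * Real.sin (Real.pi * (m.val + 1) * (n.val + 1) / N)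

/-- The type-I discrete sine transform is symmetric and squares to the identity;
in particular it is an orthogonal matrix. -/
theorem sineTransformI_symm_sq_one_orthogonal (N : ℕ) (hN : 2 ≤ N) :
    (sineTransformI N).IsSymm ∧
      sineTransformI N * sineTransformI N = 1 ∧
        sineTransformI N ∈ Matrix.orthogonalGroup (Fin (N - 1)) ℝ := by
  have hsymm : (sineTransformI N).IsSymm := by
    ext i j
    simp only [Matrix.transpose_apply, sineTransformI]
    ring_nf
  have hsq : sineTransformI N * sineTransformI N = 1 := by
    ext m n
    rw [Matrix.mul_apply, Matrix.one_apply]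
    have hsqrt : Real.sqrt (2 / N) * Real.sqrt (2 / N) = 2 / N :=
      Real.mul_self_sqrt (by positivity)
    have hNR : (0:ℝ) < N := by positivity
    have hterm : ∀ k : Fin (N-1), sineTransformI N m k * sineTransformI N k n
        = (2 / N) * (Real.sin (Real.pi * (m.val+1) * (k.val+1) / N)
            * Real.sin (Real.pi * (n.val+1) * (k.val+1) / N)) := by
      intro k
      simp only [sineTransformI]
      rw [show Real.pi * (k.val+1) * (n.val+1) / N = Real.pi * (n.val+1) * (k.val+1) / N by ring,
        mul_mul_mul_comm, hsqrt]
    rw [Finset.sum_congr rfl (fun k _ => hterm k), ← Finset.mul_sum]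
    have hsum := sin_orth N (m.val+1) (n.val+1) hN (by omega) (by omega) (by omega) (by omega)
    push_cast at hsum
    have hconv : ∑ k : Fin (N-1), Real.sin (Real.pi * (m.val+1) * (k.val+1) / N)
          * Real.sin (Real.pi * (n.val+1) * (k.val+1) / N)
        = ∑ k ∈ Finset.range (N-1), Real.sin (Real.pi * (m.val+1) * (k+1) / N)
          * Real.sin (Real.pi * (n.val+1) * (k+1) / N) := by
      rw [← Fin.sum_univ_eq_sum_range (fun k => Real.sin (Real.pi * (m.val+1) * (k+1) / N)
          * Real.sin (Real.pi * (n.val+1) * (k+1) / N)) (N-1)]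
    rw [hconv, hsum]
    by_cases hmn : m = n
    · rw [if_pos (congrArg Fin.val hmn), if_pos hmn]
      field_simp
    · rw [if_neg (fun h => hmn (Fin.ext h)), if_neg hmn, mul_zero]
  refine ⟨hsymm, hsq, ?_⟩
  rw [Matrix.mem_orthogonalGroup_iff]
  have hstar : star (sineTransformI N) = sineTransformI N := by
    ext i j
    rw [Matrix.star_apply, star_trivial]
    exact congrFun (congrFun hsymm i) j
  rw [hsymm.eq]
  exact hsq
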